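/- For every natural number n of boolean variables and every natural number k with 0 ≤ k ≤ 2^n - 1, there exists a boolean function φ : (Fin n → Bool) → Bool such that the number of satisfying assignments of φ (i.e., the cardinality of {a : Fin n → Bool | φ a = true}) is exactly k. Moreover, such a φ can be expressed as a formula built from variables, conjunction, disjunction, and the constant false, of size linear in n. -/

import Mathlib

/-- Boolean formulas over `n` variables built from `false`, variables,
conjunction and disjunction. -/
inductive BForm (n : ℕ) where
  | fls : BForm n
  | var (i : Fin n) : BForm n
  | conj (a b : BForm n) : BForm n
  | disj (a b : BForm n) : BForm n

/-- Evaluation of a boolean formula under an assignment. -/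
def BForm.eval {n : ℕ} (a : Fin n → Bool) : BForm n → Bool
  | .fls => false
  | .var i => a i
  | .conj φ ψ => φ.eval a && ψ.eval a
  | .disj φ ψ => φ.eval a || ψ.eval a

/-- Size of a boolean formula. -/
def BForm.size {n : ℕ} : BForm n → ℕ
  | .fls => 1
  | .var _ => 1
  | .conj φ ψ => φ.size + ψ.size + 1
  | .disj φ ψ => φ.size + ψ.size + 1

def BForm.lift {n : ℕ} : BForm n → BForm (n + 1)
  | .fls => .fls
  | .var i => .var i.succ
  | .conj a b => .conj a.lift b.lift
  | .disj a b => .disj a.lift b.lift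

lemma BForm.eval_lift {n : ℕ} (a : Fin (n + 1) → Bool) (φ : BForm n) :
    φ.lift.eval a = φ.eval (a ∘ Fin.succ) := by
  induction φ <;> simp [BForm.lift, BForm.eval, *]

lemma BForm.size_lift {n : ℕ} (φ : BForm n) : φ.lift.size = φ.size := by
  induction φ <;> simp [BForm.lift, BForm.size, *]

def BForm.mk' : (n : ℕ) → ℕ → BForm n
  | 0, _ => .fls
  | n + 1, k =>
    if k < 2 ^ n then .conj (.var 0) (BForm.lift (BForm.mk' n k))
    else .disj (.var 0) (BForm.lift (BForm.mk' n (k - 2 ^ n)))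

lemma BForm.size_mk' : ∀ n k, (BForm.mk' n k).size ≤ 2 * n + 1
  | 0, k => by simp [BForm.mk', BForm.size]
  | n + 1, k => by
    have h1 := BForm.size_mk' n k
    have h2 := BForm.size_mk' n (k - 2 ^ n)
    unfold BForm.mk'
    split <;> simp [BForm.size, BForm.size_lift] <;> omega

lemma card_cons {n : ℕ} (b : Bool) (G : (Fin n → Bool) → Bool) :
    (Finset.univ.filter fun a : Fin (n + 1) → Bool =>
        a 0 = b ∧ G (a ∘ Fin.succ) = true).card
      = (Finset.univ.filter fun f : Fin n → Bool => G f = true).card := by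
  apply Finset.card_nbij' (i := fun a => a ∘ Fin.succ) (j := fun f => Fin.cons b f)
  · intro a ha
    simp only [Finset.mem_coe, Finset.mem_filter, Finset.mem_univ, true_and] at ha ⊢
    exact ha.2
  · intro f hf
    simp only [Finset.mem_coe, Finset.mem_filter, Finset.mem_univ, true_and] at hf ⊢
    constructor
    · simp
    · simpa [Function.comp] using hf
  · intro a ha
    simp only [Finset.mem_coe, Finset.mem_filter, Finset.mem_univ, true_and] at ha
    funext i
    refine Fin.cases ?_ ?_ i
    · simpa using ha.1.symm
    · intro j; simp [Function.comp]
  · intro f hf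
    funext i
    simp [Function.comp]

lemma card_zero_true (n : ℕ) :
    (Finset.univ.filter fun a : Fin (n + 1) → Bool => a 0 = true).card = 2 ^ n := by
  have heq : (Finset.univ.filter fun a : Fin (n + 1) → Bool => a 0 = true)
      = (Finset.univ.filter fun a : Fin (n + 1) → Bool =>
          a 0 = true ∧ (fun _ : Fin n → Bool => true) (a ∘ Fin.succ) = true) := by
    apply Finset.filter_congr
    intro a _
    simp
  rw [heq, card_cons true (fun _ => true)]
  simp [Finset.filter_true_of_mem]

theorem exists_formula_with_count :
    ∃ C : ℕ, ∀ (n k : ℕ), k ≤ 2 ^ n - 1 →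
      ∃ φ : BForm n,
        (Finset.univ.filter fun a : Fin n → Bool => φ.eval a = true).card = k ∧
        φ.size ≤ C * n + C := by
  have key : ∀ n k, k < 2 ^ n →
      (Finset.univ.filter fun a : Fin n → Bool =>
        (BForm.mk' n k).eval a = true).card = k := by
    intro n
    induction n with
    | zero =>
      intro k hk
      interval_cases k
      simp [BForm.mk', BForm.eval]
    | succ n ih =>
      intro k hk
      unfold BForm.mk'
      split
      case isTrue h =>
        have : ∀ a : Fin (n + 1) → Bool,
            ((BForm.conj (.var 0) (BForm.lift (BForm.mk' n k))).eval a = true)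
              ↔ (a 0 = true ∧ (BForm.mk' n k).eval (a ∘ Fin.succ) = true) := by
          intro a
          simp [BForm.eval, BForm.eval_lift]
        simp only [this]
        rw [card_cons true (fun f => (BForm.mk' n k).eval f)]
        exact ih k h
      case isFalse h =>
        push_neg at h
        have hk' : k - 2 ^ n < 2 ^ n := by
          have : k < 2 ^ n + 2 ^ n := by
            have := hk; rw [pow_succ] at this; omega
          omega
        have : ∀ a : Fin (n + 1) → Bool,
            ((BForm.disj (.var 0) (BForm.lift (BForm.mk' n (k - 2 ^ n)))).eval a = true)
              ↔ (a 0 = true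
                ∨ (a 0 = false ∧ (BForm.mk' n (k - 2 ^ n)).eval (a ∘ Fin.succ) = true)) := by
          intro a
          cases ha : a 0 <;> simp [BForm.eval, BForm.eval_lift, ha]
        simp only [this]
        rw [Finset.filter_or, Finset.card_union_of_disjoint]
        · rw [card_cons false (fun f => (BForm.mk' n (k - 2 ^ n)).eval f)]
          rw [ih _ hk']
          rw [card_zero_true n]
          omega
        · rw [Finset.disjoint_left]
          intro a ha hb
          simp only [Finset.mem_filter] at ha hb
          rw [ha.2] at hb
          exact absurd hb.2.1 (by simp)
  refine ⟨2, fun n k hk => ?_⟩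
  have hk2 : k < 2 ^ n := by
    have : 0 < 2 ^ n := Nat.pow_pos (by norm_num)
    omega
  exact ⟨BForm.mk' n k, key n k hk2, by have := BForm.size_mk' n k; omega⟩
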